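/- Let (g_n) be probability densities on [1,∞) such that for every M > 1, (1/log n) log g_n(x) → -log x uniformly on [1, M], and suppose limsup_n (1/log n) log ∫_M^∞ g_n ≤ -log M for every M ≥ 1. Then for every Borel set A ⊆ [1, ∞) of positive Lebesgue measure, lim_{n→∞} (1/log n) log ∫_A g_n(x) dx = -ess inf_{x∈A} log x. -/

import Mathlib

open Filter MeasureTheory

-- aux: from log bound to value bound for nonneg reals
lemma aux_le_exp {y c : ℝ} (hy : 0 ≤ y) (h : Real.log y ≤ c) : y ≤ Real.exp c := by
  rcases eq_or_lt_of_le hy with h0 | h0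
  · exact le_of_lt (lt_of_le_of_lt (le_of_eq h0.symm) (Real.exp_pos c))
  · calc y = Real.exp (Real.log y) := (Real.exp_log h0).symm
      _ ≤ Real.exp c := Real.exp_le_exp.2 h

theorem stmt_15 (g : ℕ → ℝ → ℝ)
    (hg_nonneg : ∀ n x, 0 ≤ g n x)
    (hg_meas : ∀ n, Measurable (g n))
    (hg_prob : ∀ n, ∫ x in Set.Ici (1 : ℝ), g n x = 1)
    (h_unif : ∀ M > (1 : ℝ),
      TendstoUniformlyOn (fun (n : ℕ) (x : ℝ) => Real.log (g n x) / Real.log n)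
        (fun x => -Real.log x) atTop (Set.Icc 1 M))
    (h_tail : ∀ M ≥ (1 : ℝ),
      limsup (fun n : ℕ => Real.log (∫ x in Set.Ioi M, g n x) / Real.log n) atTop
        ≤ -Real.log M) :
    ∀ A : Set ℝ, MeasurableSet A → A ⊆ Set.Ici 1 → 0 < volume A →
      Tendsto (fun n : ℕ => Real.log (∫ x in A, g n x) / Real.log n) atTop
        (nhds (-essInf (fun x => Real.log x) (volume.restrict A))) := by
  intro A hA hA1 hApos
  set μ := volume.restrict A with hμdef
  have hAne : μ ≠ 0 := by
    simp only [hμdef, Ne, Measure.restrict_eq_zero]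
    exact hApos.ne'
  haveI : NeBot (ae μ) := ae_neBot.2 hAne
  have haeA : ∀ᵐ x ∂μ, x ∈ A := ae_restrict_mem hA
  have hae0 : ∀ᵐ x ∂μ, 0 ≤ Real.log x :=
    haeA.mono fun x hx => Real.log_nonneg (hA1 hx)
  have hbdd : IsBoundedUnder (· ≥ ·) (ae μ) Real.log :=
    ⟨0, by simpa [eventually_map] using hae0⟩
  -- a bounded window of positive measure
  have hM0 : ∃ M : ℝ, 1 < M ∧ μ (Set.Icc 1 M) ≠ 0 := by
    by_contra hcon
    push_neg at hcon
    have hun : Set.Ici (1:ℝ) = ⋃ k : ℕ, Set.Icc 1 ((k:ℝ)+2) := by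
      ext x
      simp only [Set.mem_Ici, Set.mem_iUnion, Set.mem_Icc]
      constructor
      · intro hx
        obtain ⟨k, hk⟩ := exists_nat_ge x
        exact ⟨k, hx, by linarith⟩
      · rintro ⟨k, hk, -⟩; exact hk
    have h0 : μ (Set.Ici 1) = 0 := by
      rw [hun]
      exact measure_iUnion_null fun k => hcon _ (by have : (0:ℝ) ≤ (k:ℝ) := Nat.cast_nonneg k; linarith)
    have : μ (Set.Ici 1) = volume A := by
      rw [hμdef, Measure.restrict_apply measurableSet_Ici,
        Set.inter_eq_right.2 hA1]
    rw [this] at h0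
    exact hApos.ne' h0
  obtain ⟨M₀, hM₀1, hM₀pos⟩ := hM0
  have hcb : IsCoboundedUnder (· ≥ ·) (ae μ) Real.log := by
    apply IsCoboundedUnder.of_frequently_le (a := Real.log M₀)
    rw [frequently_ae_iff]
    intro hz
    apply hM₀pos
    refine measure_mono_null ?_ hz
    intro x hx
    exact Real.log_le_log (lt_of_lt_of_le one_pos hx.1) hx.2
  set L := essInf (fun x => Real.log x) μ with hLdef
  have hLliminf : L = liminf Real.log (ae μ) := rfl
  have hL0 : 0 ≤ L := by
    rw [hLliminf]
    exact le_liminf_of_le hcb hae0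
  have haeL : ∀ᵐ x ∂μ, L ≤ Real.log x := ae_essInf_le hbdd
  -- positive measure below L + δ
  have hbelow : ∀ δ : ℝ, 0 < δ → μ {x | Real.log x < L + δ} ≠ 0 := by
    intro δ hδ hz
    have hev : ∀ᵐ x ∂μ, L + δ ≤ Real.log x := by
      rw [ae_iff]
      refine measure_mono_null ?_ hz
      intro x hx
      simpa using not_le.1 hx
    have : L + δ ≤ L := by
      rw [hLliminf]
      exact le_liminf_of_le hcb hev
    linarith
  -- integrability
  have hInt : ∀ n, IntegrableOn (g n) (Set.Ici 1) volume := by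
    intro n
    by_contra hni
    have := hg_prob n
    rw [integral_undef hni] at this
    exact one_ne_zero this.symm
  have hIntA : ∀ n, IntegrableOn (g n) A volume := fun n =>
    (hInt n).mono_set hA1
  -- lower bound
  have hlow : ∀ ε : ℝ, 0 < ε → ∀ᶠ n : ℕ in atTop,
      Real.exp ((-L - ε) * Real.log n) ≤ ∫ x in A, g n x := by
    intro ε hε
    set δ := ε / 3 with hδdef
    have hδ : 0 < δ := by positivity
    -- null sets at level L
    have hnull1 : μ {x | Real.log x < L} = 0 := by
      have := ae_iff.1 haeL
      simpa [not_le] using this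
    have hnull2 : μ {x | Real.log x = L} = 0 := by
      have hsub : {x : ℝ | Real.log x = L} ⊆ {0, Real.exp L, -Real.exp L} := by
        intro x hx
        simp only [Set.mem_setOf_eq] at hx
        rcases eq_or_ne x 0 with h0 | h0
        · simp [h0]
        · have habs : Real.log |x| = L := by rwa [Real.log_abs]
          have hxa : |x| = Real.exp L := by
            rw [← habs, Real.exp_log (abs_pos.2 h0)]
          rcases abs_eq (le_of_lt (Real.exp_pos L)) |>.1 hxa with h | h
          · simp [h]
          · simp [h]
      have hfin : ({(0:ℝ), Real.exp L, -Real.exp L} : Set ℝ).Finite :=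
        (Set.finite_singleton _).insert _ |>.insert _
      have hv : volume ({(0:ℝ), Real.exp L, -Real.exp L} : Set ℝ) = 0 :=
        hfin.measure_zero volume
      have hle : μ {x | Real.log x = L} ≤ volume {x | Real.log x = L} :=
        Measure.le_iff'.1 Measure.restrict_le_self _
      exact le_antisymm (hle.trans (le_of_le_of_eq (measure_mono hsub) hv)) (zero_le)
    -- positive measure strictly above L
    have hS : μ {x | L < Real.log x ∧ Real.log x < L + δ} ≠ 0 := by
      intro hz
      apply hbelow δ hδ
      have hsub : {x : ℝ | Real.log x < L + δ} ⊆
          {x | Real.log x < L} ∪ {x | Real.log x = L} ∪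
          {x | L < Real.log x ∧ Real.log x < L + δ} := by
        intro x hx
        rcases lt_trichotomy (Real.log x) L with h | h | h
        · exact Or.inl (Or.inl h)
        · exact Or.inl (Or.inr h)
        · exact Or.inr ⟨h, hx⟩
      refine measure_mono_null hsub ?_
      rw [measure_union_null_iff]
      exact ⟨by rw [measure_union_null_iff]; exact ⟨hnull1, hnull2⟩, hz⟩
    -- pick δ'
    have hS' : ∃ k : ℕ, μ {x | L + 1/((k:ℝ)+1) ≤ Real.log x ∧ Real.log x < L + δ} ≠ 0 := by
      by_contra hcon
      push_neg at hcon
      apply hS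
      have hun : {x : ℝ | L < Real.log x ∧ Real.log x < L + δ} =
          ⋃ k : ℕ, {x | L + 1/((k:ℝ)+1) ≤ Real.log x ∧ Real.log x < L + δ} := by
        ext x
        simp only [Set.mem_setOf_eq, Set.mem_iUnion]
        constructor
        · rintro ⟨h1, h2⟩
          obtain ⟨k, hk⟩ := exists_nat_one_div_lt (sub_pos.2 h1)
          exact ⟨k, by linarith, h2⟩
        · rintro ⟨k, hk1, hk2⟩
          have : (0:ℝ) < 1/((k:ℝ)+1) := by positivity
          exact ⟨by linarith, hk2⟩
      rw [hun]
      exact measure_iUnion_null hcon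
    obtain ⟨k, hTk⟩ := hS'
    set δ' := 1/((k:ℝ)+1) with hδ'def
    have hδ' : 0 < δ' := by positivity
    set T := {x : ℝ | L + δ' ≤ Real.log x ∧ Real.log x < L + δ} with hTdef
    have hTmeas : MeasurableSet T := by
      have : T = Real.log ⁻¹' Set.Ico (L + δ') (L + δ) := rfl
      rw [this]
      exact Real.measurable_log (measurableSet_Ico)
    have hTA : μ T = volume (T ∩ A) := Measure.restrict_apply hTmeas
    -- pick M
    have hMex : ∃ m : ℕ, volume (T ∩ A ∩ Set.Icc 1 ((m:ℝ)+2)) ≠ 0 := by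
      by_contra hcon
      push_neg at hcon
      apply hTk
      rw [hTA]
      have hun : T ∩ A = ⋃ m : ℕ, T ∩ A ∩ Set.Icc 1 ((m:ℝ)+2) := by
        ext x
        simp only [Set.mem_iUnion, Set.mem_inter_iff, Set.mem_Icc]
        constructor
        · rintro ⟨hT, hA'⟩
          have hx1 : (1:ℝ) ≤ x := hA1 hA'
          obtain ⟨m, hm⟩ := exists_nat_ge x
          exact ⟨m, ⟨hT, hA'⟩, hx1, by linarith⟩
        · rintro ⟨m, ⟨hT, hA'⟩, -⟩
          exact ⟨hT, hA'⟩
      rw [hun]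
      exact measure_iUnion_null hcon
    obtain ⟨m, hBne⟩ := hMex
    set M := (m:ℝ) + 2 with hMdef
    have hM1 : (1:ℝ) < M := by
      have : (0:ℝ) ≤ (m:ℝ) := Nat.cast_nonneg m
      simp only [hMdef]; linarith
    set B := T ∩ A ∩ Set.Icc 1 M with hBdef
    have hBmeas : MeasurableSet B := ((hTmeas.inter hA).inter measurableSet_Icc)
    have hBfin : volume B ≠ ⊤ := by
      refine ne_of_lt (lt_of_le_of_lt (measure_mono Set.inter_subset_right) ?_)
      rw [Real.volume_Icc]
      exact ENNReal.ofReal_lt_top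
    set c := (volume B).toReal with hcdef
    have hc : 0 < c := ENNReal.toReal_pos hBne hBfin
    -- uniform convergence
    set τ := min δ (δ'/2) with hτdef
    have hτ : 0 < τ := lt_min hδ (by linarith)
    have huM := (Metric.tendstoUniformlyOn_iff.1 (h_unif M hM1)) τ hτ
    -- smallness of n^(-δ) against c
    have hexp0 : Tendsto (fun n : ℕ => Real.exp (-δ * Real.log n)) atTop (nhds 0) := by
      apply Real.tendsto_exp_atBot.comp
      exact Tendsto.const_mul_atTop_of_neg (by linarith)
        (Real.tendsto_log_atTop.comp tendsto_natCast_atTop_atTop)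
    have hcs : ∀ᶠ n : ℕ in atTop, Real.exp (-δ * Real.log n) ≤ c :=
      hexp0.eventually_le_const hc
    filter_upwards [huM, hcs, eventually_ge_atTop 2] with n hun hcsn h2
    have hlogn : 0 < Real.log n := by
      apply Real.log_pos
      exact_mod_cast (by omega : (1:ℕ) < n)
    -- pointwise bound on B
    have key : ∀ x ∈ B, Real.exp ((-L - 2*δ) * Real.log n) ≤ g n x := by
      rintro x ⟨⟨hxT, hxA⟩, hxI⟩
      have hd := hun x hxI
      rw [Real.dist_eq] at hd
      have hgne : g n x ≠ 0 := by
        intro h0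
        rw [h0, Real.log_zero, zero_div, sub_zero] at hd
        have habs := abs_lt.1 hd
        have hlx : L + δ' ≤ Real.log x := hxT.1
        have hτδ' : τ ≤ δ'/2 := min_le_right _ _
        linarith [habs.1, hL0]
      have hgpos : 0 < g n x := lt_of_le_of_ne (hg_nonneg n x) (Ne.symm hgne)
      have h1 : -Real.log x - τ < Real.log (g n x) / Real.log n := by
        have := abs_lt.1 hd
        linarith [this.1, this.2]
      have h2' : (-L - 2*δ) * Real.log n ≤ Real.log (g n x) := by
        have hstep : (-Real.log x - τ) * Real.log n < Real.log (g n x) :=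
          (lt_div_iff₀ hlogn).1 h1
        have hlogx : Real.log x < L + δ := hxT.2
        have hτδ : τ ≤ δ := min_le_left _ _
        have hcoef : -L - 2*δ ≤ -Real.log x - τ := by linarith
        calc (-L - 2*δ) * Real.log n ≤ (-Real.log x - τ) * Real.log n :=
              mul_le_mul_of_nonneg_right hcoef hlogn.le
          _ ≤ Real.log (g n x) := hstep.le
      calc Real.exp ((-L - 2*δ) * Real.log n) ≤ Real.exp (Real.log (g n x)) :=
            Real.exp_le_exp.2 h2'
        _ = g n x := Real.exp_log hgpos
    have hBsubA : B ⊆ A := Set.inter_subset_left.trans Set.inter_subset_right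
    have hIntB : IntegrableOn (g n) B volume := (hIntA n).mono_set hBsubA
    calc Real.exp ((-L - ε) * Real.log n)
        = Real.exp (-δ * Real.log n) * Real.exp ((-L - 2*δ) * Real.log n) := by
          rw [← Real.exp_add]; congr 1; rw [hδdef]; ring
      _ ≤ c * Real.exp ((-L - 2*δ) * Real.log n) :=
          mul_le_mul_of_nonneg_right hcsn (Real.exp_pos _).le
      _ = ∫ _ in B, Real.exp ((-L - 2*δ) * Real.log n) := by
          rw [setIntegral_const, smul_eq_mul]; rfl
      _ ≤ ∫ x in B, g n x := by
          refine setIntegral_mono_on ?_ hIntB hBmeas key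
          exact integrableOn_const hBfin
      _ ≤ ∫ x in A, g n x := by
          refine setIntegral_mono_set (hIntA n)
            (Filter.Eventually.of_forall fun x => hg_nonneg n x) ?_
          exact Filter.Eventually.of_forall hBsubA
  -- consequence: eventual positivity and lower bound on u
  have hlow' : ∀ ε : ℝ, 0 < ε → ∀ᶠ n : ℕ in atTop,
      (0 < ∫ x in A, g n x) ∧
      -L - ε ≤ Real.log (∫ x in A, g n x) / Real.log n := by
    intro ε hε
    filter_upwards [hlow ε hε, eventually_ge_atTop 2] with n hn h2
    have hlogn : 0 < Real.log n := by
      apply Real.log_pos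
      exact_mod_cast (by omega : (1:ℕ) < n)
    have hpos : 0 < ∫ x in A, g n x := lt_of_lt_of_le (Real.exp_pos _) hn
    refine ⟨hpos, ?_⟩
    rw [le_div_iff₀ hlogn]
    calc (-L - ε) * Real.log n = Real.log (Real.exp ((-L - ε) * Real.log n)) :=
          (Real.log_exp _).symm
      _ ≤ Real.log (∫ x in A, g n x) := Real.log_le_log (Real.exp_pos _) hn
  -- upper bound
  have hup : ∀ ε : ℝ, 0 < ε → ∀ᶠ n : ℕ in atTop,
      Real.log (∫ x in A, g n x) / Real.log n ≤ -L + ε := by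
    intro ε hε
    set δ := ε / 3 with hδdef
    have hδ : 0 < δ := by positivity
    set M := max 2 (Real.exp (L + 1)) with hMdef
    have hM1 : (1:ℝ) < M := lt_of_lt_of_le one_lt_two (le_max_left _ _)
    have hMlog : L + 1 ≤ Real.log M := by
      calc L + 1 = Real.log (Real.exp (L + 1)) := (Real.log_exp _).symm
        _ ≤ Real.log M := Real.log_le_log (Real.exp_pos _) (le_max_right _ _)
    -- tail integrals are at most 1, so the tail sequence is bounded above by 0
    have hT01 : ∀ n : ℕ, 0 ≤ (∫ x in Set.Ioi M, g n x) ∧ (∫ x in Set.Ioi M, g n x) ≤ 1 := by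
      intro n
      constructor
      · exact setIntegral_nonneg measurableSet_Ioi fun x _ => hg_nonneg n x
      · rw [← hg_prob n]
        refine setIntegral_mono_set (hInt n)
          (Filter.Eventually.of_forall fun x => hg_nonneg n x) ?_
        refine Filter.Eventually.of_forall ?_
        intro x hx
        exact le_of_lt (lt_of_lt_of_le hM1 (le_of_lt hx))
    have hbdd' : IsBoundedUnder (· ≤ ·) atTop
        (fun n : ℕ => Real.log (∫ x in Set.Ioi M, g n x) / Real.log n) := by
      refine isBoundedUnder_of ⟨0, fun n => ?_⟩
      have h1 := (hT01 n).1
      have h2 := (hT01 n).2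
      exact div_nonpos_iff.2 (Or.inr ⟨Real.log_nonpos h1 h2, Real.log_natCast_nonneg n⟩)
    have htail0 : ∀ᶠ n : ℕ in atTop,
        Real.log (∫ x in Set.Ioi M, g n x) / Real.log n < -L - 1 + δ := by
      refine eventually_lt_of_limsup_lt ?_ hbdd'
      calc limsup (fun n : ℕ => Real.log (∫ x in Set.Ioi M, g n x) / Real.log n) atTop
          ≤ -Real.log M := h_tail M (by linarith)
        _ < -L - 1 + δ := by linarith
    set K := (volume (A ∩ Set.Icc 1 M)).toReal with hKdef
    have hK0 : 0 ≤ K := ENNReal.toReal_nonneg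
    have hKfin : volume (A ∩ Set.Icc 1 M) ≠ ⊤ := by
      refine ne_of_lt (lt_of_le_of_lt (measure_mono Set.inter_subset_right) ?_)
      rw [Real.volume_Icc]
      exact ENNReal.ofReal_lt_top
    have hevK : ∀ᶠ n : ℕ in atTop, Real.log (K + 1) ≤ δ * Real.log n := by
      have ht : Tendsto (fun n : ℕ => δ * Real.log n) atTop atTop :=
        Tendsto.const_mul_atTop hδ
          (Real.tendsto_log_atTop.comp tendsto_natCast_atTop_atTop)
      exact ht.eventually_ge_atTop _
    have huM := (Metric.tendstoUniformlyOn_iff.1 (h_unif M hM1)) δ hδ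
    have haeL' : ∀ᵐ x ∂volume, x ∈ A → L ≤ Real.log x := (ae_restrict_iff' hA).1 haeL
    filter_upwards [huM, htail0, hevK, hlow 1 one_pos, eventually_ge_atTop 2]
      with n hun htn hKn hIp h2
    have hlogn : 0 < Real.log n := by
      apply Real.log_pos
      exact_mod_cast (by omega : (1:ℕ) < n)
    have hIpos : 0 < ∫ x in A, g n x := lt_of_lt_of_le (Real.exp_pos _) hIp
    set κ := Real.exp ((-L + δ) * Real.log n) with hκdef
    -- split the integral
    have hAeq : A = (A ∩ Set.Icc 1 M) ∪ (A ∩ Set.Ioi M) := by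
      ext x
      simp only [Set.mem_union, Set.mem_inter_iff, Set.mem_Icc, Set.mem_Ioi]
      constructor
      · intro hx
        have hx1 : (1:ℝ) ≤ x := hA1 hx
        rcases le_or_gt x M with h | h
        · exact Or.inl ⟨hx, hx1, h⟩
        · exact Or.inr ⟨hx, h⟩
      · rintro (⟨hx, -⟩ | ⟨hx, -⟩) <;> exact hx
    have hdisj : Disjoint (A ∩ Set.Icc 1 M) (A ∩ Set.Ioi M) := by
      refine Set.disjoint_left.2 ?_
      rintro x ⟨-, -, hxM⟩ ⟨-, hxM'⟩
      exact absurd hxM (not_le.2 hxM')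
    have hsplit : (∫ x in A, g n x) =
        (∫ x in A ∩ Set.Icc 1 M, g n x) + ∫ x in A ∩ Set.Ioi M, g n x := by
      rw [← setIntegral_union hdisj (hA.inter measurableSet_Ioi)
        ((hIntA n).mono_set Set.inter_subset_left)
        ((hIntA n).mono_set Set.inter_subset_left), ← hAeq]
    -- bound on the bounded part
    have hbound1 : (∫ x in A ∩ Set.Icc 1 M, g n x) ≤ K * κ := by
      have hptwise : ∀ᵐ x ∂volume, x ∈ A ∩ Set.Icc 1 M → g n x ≤ κ := by
        filter_upwards [haeL'] with x hx
        rintro ⟨hxA, hxI⟩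
        have hLx : L ≤ Real.log x := hx hxA
        have hd := hun x hxI
        rw [Real.dist_eq] at hd
        have habs := abs_lt.1 hd
        have hlt : Real.log (g n x) / Real.log n < -L + δ := by linarith [habs.2]
        have : Real.log (g n x) < (-L + δ) * Real.log n := (div_lt_iff₀ hlogn).1 hlt
        exact aux_le_exp (hg_nonneg n x) this.le
      calc (∫ x in A ∩ Set.Icc 1 M, g n x) ≤ ∫ _ in A ∩ Set.Icc 1 M, κ := by
            refine setIntegral_mono_on_ae ((hIntA n).mono_set Set.inter_subset_left)
              (integrableOn_const hKfin)
              (hA.inter measurableSet_Icc) hptwise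
        _ = K * κ := by rw [setIntegral_const, smul_eq_mul]; rfl
    -- bound on the tail part
    have hbound2 : (∫ x in A ∩ Set.Ioi M, g n x) ≤ κ := by
      have hbound2a : (∫ x in A ∩ Set.Ioi M, g n x) ≤ ∫ x in Set.Ioi M, g n x := by
        refine setIntegral_mono_set ((hInt n).mono_set ?_)
          (Filter.Eventually.of_forall fun x => hg_nonneg n x)
          (Filter.Eventually.of_forall Set.inter_subset_right)
        intro x hx
        exact le_of_lt (lt_of_lt_of_le hM1 (le_of_lt hx))
      have hbound2b : (∫ x in Set.Ioi M, g n x) ≤ Real.exp ((-L - 1 + δ) * Real.log n) := by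
        have : Real.log (∫ x in Set.Ioi M, g n x) < (-L - 1 + δ) * Real.log n :=
          (div_lt_iff₀ hlogn).1 htn
        exact aux_le_exp (hT01 n).1 this.le
      have hbound2c : Real.exp ((-L - 1 + δ) * Real.log n) ≤ κ := by
        apply Real.exp_le_exp.2
        apply mul_le_mul_of_nonneg_right _ hlogn.le
        linarith
      linarith
    have htotal : (∫ x in A, g n x) ≤ (K + 1) * κ := by
      rw [hsplit]
      have : K * κ + κ = (K + 1) * κ := by ring
      linarith [hbound1, hbound2]
    -- take logs
    have hlogI : Real.log (∫ x in A, g n x) ≤ Real.log (K + 1) + (-L + δ) * Real.log n := by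
      calc Real.log (∫ x in A, g n x) ≤ Real.log ((K + 1) * κ) :=
            Real.log_le_log hIpos htotal
        _ = Real.log (K + 1) + Real.log κ :=
            Real.log_mul (by linarith) (Real.exp_ne_zero _)
        _ = Real.log (K + 1) + (-L + δ) * Real.log n := by rw [hκdef, Real.log_exp]
    rw [div_le_iff₀ hlogn]
    calc Real.log (∫ x in A, g n x) ≤ Real.log (K + 1) + (-L + δ) * Real.log n := hlogI
      _ ≤ δ * Real.log n + (-L + δ) * Real.log n := by linarith
      _ = (-L + 2*δ) * Real.log n := by ring
      _ ≤ (-L + ε) * Real.log n := by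
          apply mul_le_mul_of_nonneg_right _ hlogn.le
          linarith
  rw [Metric.tendsto_atTop]
  intro ε hε
  have h2 : (0:ℝ) < ε / 2 := by linarith
  obtain ⟨N, hN⟩ := eventually_atTop.1 (((hlow' _ h2).and (hup _ h2)).mono
    (fun n hn => And.intro hn.1.2 hn.2))
  refine ⟨N, fun n hn => ?_⟩
  have := hN n hn
  rw [Real.dist_eq]
  have habs : |Real.log (∫ x in A, g n x) / Real.log n - -L| ≤ ε / 2 :=
    abs_le.2 ⟨by linarith [this.1], by linarith [this.2]⟩
  linarith
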